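/- Let H₁, H₂ be self-adjoint operators on finite-dimensional Hilbert spaces ℋ₁, ℋ₂, let H = H₁ ⊗ I + I ⊗ H₂, and suppose E ∉ σ(H). Then for all unit vectors of the form δ_a = φ_a ⊗ ψ_a and δ_b = φ_b ⊗ ψ_b where {φ} and {ψ} are orthonormal bases, |⟨δ_a, (H − E)⁻¹ δ_b⟩| ≤ Σ_{λ ∈ σ(H₁)} |⟨ψ_a, (H₂ − (E − λ))⁻¹ ψ_b⟩|, where each E − λ ∉ σ(H₂). -/

import Mathlib

open scoped Kronecker

open Matrix in
lemma spec_conj {n : Type*} [Fintype n] [DecidableEq n] (W : Matrix n n ℂ)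
    (hW : W ∈ Matrix.unitaryGroup n ℂ) (d : n → ℂ) (z : ℂ) :
    z ∈ spectrum ℂ (W * Matrix.diagonal d * star W) ↔ ∃ k, d k = z := by
  have hWW : W * star W = 1 := (Matrix.mem_unitaryGroup_iff).mp hW
  have hdW : W.det * (star W).det = 1 := by
    rw [← Matrix.det_mul, hWW, Matrix.det_one]
  have key : (algebraMap ℂ (Matrix n n ℂ) z) - W * Matrix.diagonal d * star W
      = W * Matrix.diagonal (fun k => z - d k) * star W := by
    have h1 : (algebraMap ℂ (Matrix n n ℂ) z) = W * (Matrix.diagonal (fun _ : n => z)) * star W := by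
      have h2 : Matrix.diagonal (fun _ : n => z) = z • (1 : Matrix n n ℂ) := by
        simp [Matrix.smul_one_eq_diagonal]
      rw [Matrix.algebraMap_eq_diagonal, h2, Matrix.mul_smul, Matrix.smul_mul, Matrix.mul_one,
        hWW]
      exact h2
    rw [h1, ← Matrix.sub_mul, ← Matrix.mul_sub, Matrix.diagonal_sub]
  rw [spectrum.mem_iff, key, Matrix.isUnit_iff_isUnit_det, Matrix.det_mul, Matrix.det_mul,
    Matrix.det_diagonal, isUnit_iff_ne_zero, not_ne_iff, mul_eq_zero, mul_eq_zero]
  have hW0 : W.det ≠ 0 := left_ne_zero_of_mul_eq_one hdW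
  have hW0' : (star W).det ≠ 0 := right_ne_zero_of_mul_eq_one hdW
  simp only [hW0, hW0', false_or, or_false, Finset.prod_eq_zero_iff]
  constructor
  · rintro ⟨i, _, hi⟩; exact ⟨i, (sub_eq_zero.mp hi).symm⟩
  · rintro ⟨k, hk⟩; exact ⟨k, Finset.mem_univ k, by rw [hk, sub_self]⟩

lemma conj_entry {n : Type*} [Fintype n] [DecidableEq n] (W : Matrix n n ℂ) (d : n → ℂ)
    (a b : n) :
    (W * Matrix.diagonal d * star W) a b = ∑ k, W a k * d k * (starRingEnd ℂ) (W b k) := by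
  rw [Matrix.mul_apply]
  simp only [Matrix.mul_diagonal, Matrix.star_apply, Complex.star_def]

lemma inv_conj {n : Type*} [Fintype n] [DecidableEq n] (W : Matrix n n ℂ)
    (hW : W ∈ Matrix.unitaryGroup n ℂ) (d : n → ℂ) (hd : ∀ k, d k ≠ 0) :
    (W * Matrix.diagonal d * star W)⁻¹ = W * Matrix.diagonal (fun k => (d k)⁻¹) * star W := by
  apply Matrix.inv_eq_right_inv
  have h1 : star W * W = 1 := Matrix.mem_unitaryGroup_iff'.mp hW
  have h2 : W * star W = 1 := Matrix.mem_unitaryGroup_iff.mp hW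
  have e : (W * Matrix.diagonal d * star W) * (W * Matrix.diagonal (fun k => (d k)⁻¹) * star W)
      = W * (Matrix.diagonal d * ((star W * W) * Matrix.diagonal (fun k => (d k)⁻¹))) * star W := by
    simp only [Matrix.mul_assoc]
  rw [e, h1, Matrix.one_mul, Matrix.diagonal_mul_diagonal]
  have e2 : (fun k => d k * (d k)⁻¹) = fun _ : n => (1:ℂ) :=
    funext fun k => mul_inv_cancel₀ (hd k)
  rw [e2, Matrix.diagonal_one, Matrix.mul_one, h2]

lemma sub_smul_conj {n : Type*} [Fintype n] [DecidableEq n] {M W : Matrix n n ℂ}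
    (hW : W ∈ Matrix.unitaryGroup n ℂ) {d : n → ℂ}
    (hM : M = W * Matrix.diagonal d * star W) (c : ℂ) :
    M - c • (1 : Matrix n n ℂ) = W * Matrix.diagonal (fun k => d k - c) * star W := by
  have h2 : W * star W = 1 := Matrix.mem_unitaryGroup_iff.mp hW
  have e1 : c • (1 : Matrix n n ℂ) = W * Matrix.diagonal (fun _ : n => c) * star W := by
    have h3 : Matrix.diagonal (fun _ : n => c) = c • (1 : Matrix n n ℂ) := by
      simp [Matrix.smul_one_eq_diagonal]
    rw [h3, Matrix.mul_smul, Matrix.smul_mul, Matrix.mul_one, h2]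
  rw [hM, e1, ← Matrix.sub_mul, ← Matrix.mul_sub, Matrix.diagonal_sub]

lemma star_kron {A B : Type*} [Fintype A] [Fintype B] (M : Matrix A A ℂ) (N : Matrix B B ℂ) :
    star (M ⊗ₖ N) = star M ⊗ₖ star N := by
  ext ⟨i, j⟩ ⟨k, l⟩
  simp [Matrix.star_apply, Matrix.kroneckerMap_apply, star_mul']

lemma row_sq {n : Type*} [Fintype n] [DecidableEq n] {U : Matrix n n ℂ}
    (hU : U ∈ Matrix.unitaryGroup n ℂ) (a : n) : ∑ i, ‖U a i‖ ^ 2 = 1 := by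
  have h2 : U * star U = 1 := Matrix.mem_unitaryGroup_iff.mp hU
  have h3 : (U * star U) a a = 1 := by rw [h2]; simp [Matrix.one_apply]
  rw [Matrix.mul_apply] at h3
  have h4 : ∀ i, U a i * (star U) i a = ((‖U a i‖ ^ 2 : ℝ) : ℂ) := by
    intro i
    rw [Matrix.star_apply, Complex.star_def, Complex.mul_conj]
    norm_cast
    rw [Complex.normSq_eq_norm_sq]
  rw [Finset.sum_congr rfl (fun i _ => h4 i)] at h3
  have h5 : ((∑ i, ‖U a i‖ ^ 2 : ℝ) : ℂ) = ((1 : ℝ) : ℂ) := by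
    push_cast
    simpa using h3
  exact_mod_cast h5

lemma proj_bound {n : Type*} [Fintype n] [DecidableEq n] {U : Matrix n n ℂ}
    (hU : U ∈ Matrix.unitaryGroup n ℂ) (a b : n) (T : Finset n) :
    ‖∑ i ∈ T, U a i * (starRingEnd ℂ) (U b i)‖ ≤ 1 := by
  have h1 : ‖∑ i ∈ T, U a i * (starRingEnd ℂ) (U b i)‖ ≤ ∑ i ∈ T, ‖U a i‖ * ‖U b i‖ := by
    refine (norm_sum_le _ _).trans (Finset.sum_le_sum fun i _ => ?_)
    rw [norm_mul, RCLike.norm_conj]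
  have cs := Finset.sum_mul_sq_le_sq_mul_sq T (fun i => ‖U a i‖) (fun i => ‖U b i‖)
  have ha : ∑ i ∈ T, ‖U a i‖ ^ 2 ≤ 1 := by
    rw [← row_sq hU a]
    exact Finset.sum_le_sum_of_subset_of_nonneg (Finset.subset_univ T)
      (fun i _ _ => sq_nonneg _)
  have hb : ∑ i ∈ T, ‖U b i‖ ^ 2 ≤ 1 := by
    rw [← row_sq hU b]
    exact Finset.sum_le_sum_of_subset_of_nonneg (Finset.subset_univ T)
      (fun i _ _ => sq_nonneg _)
  have hnn : (0:ℝ) ≤ ∑ i ∈ T, ‖U a i‖ * ‖U b i‖ :=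
    Finset.sum_nonneg fun i _ => mul_nonneg (norm_nonneg _) (norm_nonneg _)
  have ha0 : (0:ℝ) ≤ ∑ i ∈ T, ‖U a i‖ ^ 2 := Finset.sum_nonneg fun i _ => sq_nonneg _
  nlinarith [h1, cs, ha, hb, hnn, ha0]

theorem stmt_8 {A B : Type*} [Fintype A] [DecidableEq A] [Fintype B] [DecidableEq B]
    (H₁ : Matrix A A ℂ) (H₂ : Matrix B B ℂ)
    (hH₁ : H₁.IsHermitian) (hH₂ : H₂.IsHermitian)
    (hfin : (spectrum ℂ H₁).Finite) (E : ℝ)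
    (hE : (E : ℂ) ∉ spectrum ℂ
      (H₁ ⊗ₖ (1 : Matrix B B ℂ) + (1 : Matrix A A ℂ) ⊗ₖ H₂)) :
    (∀ lam ∈ spectrum ℂ H₁, (E : ℂ) - lam ∉ spectrum ℂ H₂) ∧
    ∀ a₁ b₁ : A, ∀ a₂ b₂ : B,
      ‖((H₁ ⊗ₖ (1 : Matrix B B ℂ) + (1 : Matrix A A ℂ) ⊗ₖ H₂ -
            (E : ℂ) • (1 : Matrix (A × B) (A × B) ℂ))⁻¹) (a₁, a₂) (b₁, b₂)‖ ≤
        ∑ lam ∈ hfin.toFinset,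
          ‖((H₂ - ((E : ℂ) - lam) • (1 : Matrix B B ℂ))⁻¹) a₂ b₂‖ := by
  classical
  set U₁ : Matrix A A ℂ := (hH₁.eigenvectorUnitary : Matrix A A ℂ) with hU₁def
  set U₂ : Matrix B B ℂ := (hH₂.eigenvectorUnitary : Matrix B B ℂ) with hU₂def
  have hU₁ : U₁ ∈ Matrix.unitaryGroup A ℂ := hH₁.eigenvectorUnitary.2
  have hU₂ : U₂ ∈ Matrix.unitaryGroup B ℂ := hH₂.eigenvectorUnitary.2
  have h2a : U₁ * star U₁ = 1 := Matrix.mem_unitaryGroup_iff.mp hU₁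
  have h2b : U₂ * star U₂ = 1 := Matrix.mem_unitaryGroup_iff.mp hU₂
  set lam : A → ℝ := hH₁.eigenvalues with hlamdef
  set mu : B → ℝ := hH₂.eigenvalues with hmudef
  have hs₁ : H₁ = U₁ * Matrix.diagonal (fun i => ((lam i : ℝ) : ℂ)) * star U₁ :=
    hH₁.spectral_theorem
  have hs₂ : H₂ = U₂ * Matrix.diagonal (fun j => ((mu j : ℝ) : ℂ)) * star U₂ :=
    hH₂.spectral_theorem
  set W : Matrix (A × B) (A × B) ℂ := U₁ ⊗ₖ U₂ with hWdef
  have hWU : W ∈ Matrix.unitaryGroup (A × B) ℂ := by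
    rw [Matrix.mem_unitaryGroup_iff, hWdef, star_kron, ← Matrix.mul_kronecker_mul, h2a, h2b,
      Matrix.one_kronecker_one]
  have hK : H₁ ⊗ₖ (1 : Matrix B B ℂ) + (1 : Matrix A A ℂ) ⊗ₖ H₂
      = W * Matrix.diagonal (fun p : A × B => ((lam p.1 : ℝ) : ℂ) + ((mu p.2 : ℝ) : ℂ))
        * star W := by
    have e1 : (1 : Matrix B B ℂ) = U₂ * Matrix.diagonal (fun _ : B => (1:ℂ)) * star U₂ := by
      rw [Matrix.diagonal_one, Matrix.mul_one, h2b]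
    have e2 : (1 : Matrix A A ℂ) = U₁ * Matrix.diagonal (fun _ : A => (1:ℂ)) * star U₁ := by
      rw [Matrix.diagonal_one, Matrix.mul_one, h2a]
    calc H₁ ⊗ₖ (1 : Matrix B B ℂ) + (1 : Matrix A A ℂ) ⊗ₖ H₂
        = (U₁ * Matrix.diagonal (fun i => ((lam i : ℝ) : ℂ)) * star U₁) ⊗ₖ
            (U₂ * Matrix.diagonal (fun _ : B => (1:ℂ)) * star U₂)
          + (U₁ * Matrix.diagonal (fun _ : A => (1:ℂ)) * star U₁) ⊗ₖ
            (U₂ * Matrix.diagonal (fun j => ((mu j : ℝ) : ℂ)) * star U₂) := by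
          rw [← hs₁, ← hs₂, ← e1, ← e2]
      _ = W * ((Matrix.diagonal (fun i => ((lam i : ℝ) : ℂ)) ⊗ₖ
              Matrix.diagonal (fun _ : B => (1:ℂ)) +
            Matrix.diagonal (fun _ : A => (1:ℂ)) ⊗ₖ
              Matrix.diagonal (fun j => ((mu j : ℝ) : ℂ)))) * star W := by
          rw [hWdef, star_kron, Matrix.mul_add, Matrix.add_mul]
          simp only [← Matrix.mul_assoc, ← Matrix.mul_kronecker_mul]
      _ = _ := by
          rw [Matrix.diagonal_kronecker_diagonal, Matrix.diagonal_kronecker_diagonal,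
            Matrix.diagonal_add]
          congr 2
          funext p
          simp
  have mem₁ : ∀ z : ℂ, z ∈ spectrum ℂ H₁ ↔ ∃ i, ((lam i : ℝ) : ℂ) = z := by
    intro z; rw [hs₁]; exact spec_conj U₁ hU₁ _ z
  have mem₂ : ∀ z : ℂ, z ∈ spectrum ℂ H₂ ↔ ∃ j, ((mu j : ℝ) : ℂ) = z := by
    intro z; rw [hs₂]; exact spec_conj U₂ hU₂ _ z
  have hd : ∀ p : A × B, ((lam p.1 : ℝ) : ℂ) + ((mu p.2 : ℝ) : ℂ) - (E : ℂ) ≠ 0 := by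
    intro p hp
    apply hE
    rw [hK]
    exact (spec_conj W hWU _ _).mpr ⟨p, by linear_combination hp⟩
  constructor
  · intro l hl hc
    obtain ⟨i, hi⟩ := (mem₁ l).mp hl
    obtain ⟨j, hj⟩ := (mem₂ _).mp hc
    exact hd (i, j) (by rw [hi, hj]; ring)
  · intro a₁ b₁ a₂ b₂
    have hEsub : H₁ ⊗ₖ (1 : Matrix B B ℂ) + (1 : Matrix A A ℂ) ⊗ₖ H₂ -
          (E : ℂ) • (1 : Matrix (A × B) (A × B) ℂ)
        = W * Matrix.diagonal
            (fun p : A × B => ((lam p.1 : ℝ) : ℂ) + ((mu p.2 : ℝ) : ℂ) - (E : ℂ)) * star W :=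
      sub_smul_conj hWU hK (E : ℂ)
    rw [hEsub, inv_conj W hWU _ hd, conj_entry]
    have hterm : ∀ p : A × B,
        W (a₁, a₂) p * (((lam p.1 : ℝ) : ℂ) + ((mu p.2 : ℝ) : ℂ) - (E : ℂ))⁻¹ *
            (starRingEnd ℂ) (W (b₁, b₂) p)
        = (U₁ a₁ p.1 * (starRingEnd ℂ) (U₁ b₁ p.1)) *
            (U₂ a₂ p.2 * (((lam p.1 : ℝ) : ℂ) + ((mu p.2 : ℝ) : ℂ) - (E : ℂ))⁻¹ *
              (starRingEnd ℂ) (U₂ b₂ p.2)) := by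
      intro p
      rw [hWdef]
      simp only [Matrix.kroneckerMap_apply, map_mul]
      ring
    rw [Finset.sum_congr rfl (fun p _ => hterm p), Fintype.sum_prod_type]
    simp_rw [← Finset.mul_sum]
    set g : ℂ → ℂ := fun z =>
      ∑ j, U₂ a₂ j * (z + ((mu j : ℝ) : ℂ) - (E : ℂ))⁻¹ * (starRingEnd ℂ) (U₂ b₂ j) with hgdef
    have memS : ∀ i : A, ((lam i : ℝ) : ℂ) ∈ hfin.toFinset := fun i =>
      (hfin.mem_toFinset).mpr ((mem₁ _).mpr ⟨i, rfl⟩)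
    have hgroup : ∑ i, (U₁ a₁ i * (starRingEnd ℂ) (U₁ b₁ i)) * g ((lam i : ℂ))
        = ∑ z ∈ hfin.toFinset,
            (∑ i ∈ Finset.univ.filter (fun i => ((lam i : ℝ) : ℂ) = z),
              U₁ a₁ i * (starRingEnd ℂ) (U₁ b₁ i)) * g z := by
      rw [← Finset.sum_fiberwise_of_maps_to (fun i _ => memS i)
        (fun i => (U₁ a₁ i * (starRingEnd ℂ) (U₁ b₁ i)) * g ((lam i : ℂ)))]
      refine Finset.sum_congr rfl fun z hz => ?_
      rw [Finset.sum_mul]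
      refine Finset.sum_congr rfl fun i hi => ?_
      rw [(Finset.mem_filter.mp hi).2]
    have hinner : ∀ i : A,
        (∑ j, U₂ a₂ j * (((lam i : ℝ) : ℂ) + ((mu j : ℝ) : ℂ) - (E : ℂ))⁻¹ *
          (starRingEnd ℂ) (U₂ b₂ j)) = g ((lam i : ℂ)) := fun i => rfl
    rw [Finset.sum_congr rfl (fun i _ => by rw [hinner i]), hgroup]
    refine (norm_sum_le _ _).trans (Finset.sum_le_sum fun z hz => ?_)
    rw [norm_mul]
    have hgz : g z = ((H₂ - ((E : ℂ) - z) • (1 : Matrix B B ℂ))⁻¹) a₂ b₂ := by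
      have hz' : z ∈ spectrum ℂ H₁ := hfin.mem_toFinset.mp hz
      obtain ⟨i0, hi0⟩ := (mem₁ z).mp hz'
      have hdz : ∀ j, ((mu j : ℝ) : ℂ) - ((E : ℂ) - z) ≠ 0 := by
        intro j h0
        exact hd (i0, j) (by rw [hi0]; linear_combination h0)
      have hH2z : H₂ - ((E : ℂ) - z) • (1 : Matrix B B ℂ)
          = U₂ * Matrix.diagonal (fun j => ((mu j : ℝ) : ℂ) - ((E : ℂ) - z)) * star U₂ :=
        sub_smul_conj hU₂ hs₂ ((E : ℂ) - z)
      rw [hH2z, inv_conj U₂ hU₂ _ hdz, conj_entry, hgdef]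
      refine Finset.sum_congr rfl fun j _ => ?_
      congr 2
      ring
    rw [hgz]
    calc ‖∑ i ∈ Finset.univ.filter (fun i => ((lam i : ℝ) : ℂ) = z),
          U₁ a₁ i * (starRingEnd ℂ) (U₁ b₁ i)‖ *
          ‖((H₂ - ((E : ℂ) - z) • (1 : Matrix B B ℂ))⁻¹) a₂ b₂‖
        ≤ 1 * ‖((H₂ - ((E : ℂ) - z) • (1 : Matrix B B ℂ))⁻¹) a₂ b₂‖ :=
          mul_le_mul_of_nonneg_right (proj_bound hU₁ a₁ b₁ _) (norm_nonneg _)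
      _ = _ := one_mul _
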